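/- Let Φ and Ψ be locally finite sets of points in ℝ² such that Φ is (σ,ρ,ν)-ring regulated about every y ∈ Ψ, every x ∈ Φ satisfies ‖x − y‖ > r₀ for all y ∈ Ψ, let ℓ be a path-loss function as in the context, γ₀ > 0, m > 0, and let η₀ > 0 and α ∈ (0,1) satisfy α/η₀ > σ_β. Assume Ψ is τ₀-void regulated with respect to Φ, i.e., for every x ∈ Φ there exists y ∈ Ψ with ‖x − y‖ ≤ τ₀. Then for every x ∈ Φ, the cell-free decoding delay satisfies inf_{y ∈ Ψ} D(x − y, Φ − y) ≤ m / log₂(1 + η₀), where Φ − y = {w − y : w ∈ Φ}. -/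

import Mathlib

open MeasureTheory Set

noncomputable section

abbrev Plane : Type := EuclideanSpace ℝ (Fin 2)

/-- `Φ` is `(σ,ρ,ν)`-ring regulated about the point `y`. -/
def RingRegulatedAbout (Φ : Set Plane) (y : Plane) (σ ρ ν : ℝ) : Prop :=
  ∀ r R : ℝ, 0 ≤ r → r < R →
    ((Φ ∩ {z : Plane | r < ‖z - y‖ ∧ ‖z - y‖ < R}).ncard : ℝ)
      ≤ σ + ρ * (R - r) + ν * (R ^ 2 - r ^ 2)

/-- The tail interference at the origin from points of `Φ` at distance greater than `r`. -/
def tailInterference (ℓ : ℝ → ℝ) (Φ : Set Plane) (r : ℝ) : ℝ :=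
  ∑' w : {w : Plane // w ∈ Φ ∧ r < ‖w‖}, ℓ ‖(w : Plane)‖

/-- The signal-to-residual-interference-plus-noise ratio of the transmitter at `x`
with respect to the receiver at the origin, under successive interference cancellation. -/
def SrINR (ℓ : ℝ → ℝ) (γ₀ : ℝ) (Φ : Set Plane) (x : Plane) : ℝ :=
  ℓ ‖x‖ / (tailInterference ℓ Φ ‖x‖ + γ₀)

/-- The coverage distance lower bound `τ₀`. -/
def tau0 (C' γ₀ β σβ ρβ νβ η₀ α : ℝ) : ℝ :=
  min ((Real.sqrt (ρβ ^ 2 + 4 * νβ * (α / η₀ - σβ)) - ρβ) / (2 * νβ))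
    ((C' * (1 - α) / (η₀ * γ₀)) ^ (1 / β))

/-- The rate of the link from `x` to the typical receiver at the origin:
the infimum over the transmitters `w ∈ Φ` with `‖w‖ ≤ ‖x‖` of `log₂(1 + SrINR(w,Φ))`. -/
def rate (ℓ : ℝ → ℝ) (γ₀ : ℝ) (Φ : Set Plane) (x : Plane) : ℝ :=
  sInf ((fun w => Real.logb 2 (1 + SrINR ℓ γ₀ Φ w)) '' {w ∈ Φ | ‖w‖ ≤ ‖x‖})

/-- The virtual decoding delay of a message of `m` bits from `x` to the typical receiver. -/
def vDelay (ℓ : ℝ → ℝ) (γ₀ m : ℝ) (Φ : Set Plane) (x : Plane) : ℝ :=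
  m / rate ℓ γ₀ Φ x

/-- The SIC decoding delay from `x` to the typical receiver: the supremum of the virtual
decoding delays over the transmitters `w ∈ Φ` with higher received power, i.e. `‖w‖ ≤ ‖x‖`. -/
def sicDelay (ℓ : ℝ → ℝ) (γ₀ m : ℝ) (Φ : Set Plane) (x : Plane) : ℝ :=
  sSup ((fun w => vDelay ℓ γ₀ m Φ w) '' {w ∈ Φ | ‖w‖ ≤ ‖x‖})

/-- The cell-free SIC decoding delay of the transmitter at `x`: the infimum over the
receivers `y ∈ Ψ` of the SIC decoding delay of `x - y` for the translated set `Φ - y`. -/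
def cfDelay (ℓ : ℝ → ℝ) (γ₀ m : ℝ) (Φ Ψ : Set Plane) (x : Plane) : ℝ :=
  sInf ((fun y => sicDelay ℓ γ₀ m ((fun w => w - y) '' Φ) (x - y)) '' Ψ)

/-! ### Auxiliary lemmas -/

private lemma pow_ineq1 {a b β : ℝ} (ha : 0 < a) (hab : a ≤ b) (hβ : 1 < β) :
    (β - 1) * (b ^ (-β) * (b - a)) ≤ a ^ (1 - β) - b ^ (1 - β) := by
  have hb : 0 < b := lt_of_lt_of_le ha hab
  have h0 : (0:ℝ) ∉ Set.uIcc a b := by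
    rw [Set.uIcc_of_le hab]
    intro h
    exact absurd h.1 (not_le.2 ha)
  have hcont : ContinuousOn (fun x : ℝ => x ^ (-β)) (Set.uIcc a b) := by
    intro x hx
    rw [Set.uIcc_of_le hab] at hx
    exact (Real.continuousAt_rpow_const x (-β)
      (Or.inl (ne_of_gt (lt_of_lt_of_le ha hx.1)))).continuousWithinAt
  have hint : ∫ x in a..b, x ^ (-β) = (b ^ (-β + 1) - a ^ (-β + 1)) / (-β + 1) :=
    integral_rpow (Or.inr ⟨by intro h; linarith, h0⟩)
  have hmono : ∫ x in a..b, (b ^ (-β) : ℝ) ≤ ∫ x in a..b, x ^ (-β) := by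
    apply intervalIntegral.integral_mono_on hab (intervalIntegrable_const)
      (hcont.intervalIntegrable)
    intro x hx
    exact Real.rpow_le_rpow_of_nonpos (lt_of_lt_of_le ha hx.1) hx.2 (by linarith)
  rw [intervalIntegral.integral_const, hint] at hmono
  have he1 : a ^ (-β + 1) = a ^ (1 - β) := by ring_nf
  have he2 : b ^ (-β + 1) = b ^ (1 - β) := by ring_nf
  rw [he1, he2, smul_eq_mul, le_div_iff_of_neg (by linarith : -β + 1 < 0)] at hmono
  nlinarith [hmono]

private lemma pow_ineq2 {a b β : ℝ} (ha : 0 < a) (hab : a ≤ b) (hβ : 2 < β) :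
    (β - 2) * (b ^ (-β) * (b ^ 2 - a ^ 2)) ≤ 2 * (a ^ (2 - β) - b ^ (2 - β)) := by
  have hb : 0 < b := lt_of_lt_of_le ha hab
  have h0 : (0:ℝ) ∉ Set.uIcc a b := by
    rw [Set.uIcc_of_le hab]
    intro h
    exact absurd h.1 (not_le.2 ha)
  have hcont : ContinuousOn (fun x : ℝ => x ^ (1 - β)) (Set.uIcc a b) := by
    intro x hx
    rw [Set.uIcc_of_le hab] at hx
    exact (Real.continuousAt_rpow_const x (1 - β)
      (Or.inl (ne_of_gt (lt_of_lt_of_le ha hx.1)))).continuousWithinAt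
  have hint : ∫ x in a..b, x ^ (1 - β) = (b ^ ((1 - β) + 1) - a ^ ((1 - β) + 1)) / ((1 - β) + 1) :=
    integral_rpow (Or.inr ⟨by intro h; linarith, h0⟩)
  have hmono : ∫ x in a..b, (b ^ (-β) * x : ℝ) ≤ ∫ x in a..b, x ^ (1 - β) := by
    apply intervalIntegral.integral_mono_on hab
      ((continuousOn_const.mul continuousOn_id).intervalIntegrable)
      (hcont.intervalIntegrable)
    intro x hx
    have hx0 : 0 < x := lt_of_lt_of_le ha hx.1
    have h1 : x ^ (1 - β) = x ^ (-β) * x := by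
      rw [show (1 - β) = -β + 1 by ring, Real.rpow_add hx0, Real.rpow_one]
    rw [h1]
    have : b ^ (-β) ≤ x ^ (-β) := Real.rpow_le_rpow_of_nonpos hx0 hx.2 (by linarith)
    exact mul_le_mul_of_nonneg_right this hx0.le
  have hid : ∫ x in a..b, (b ^ (-β) * x : ℝ) = b ^ (-β) * ((b ^ 2 - a ^ 2) / 2) := by
    rw [intervalIntegral.integral_const_mul, integral_id]
  rw [hid, hint] at hmono
  have he1 : a ^ ((1 - β) + 1) = a ^ (2 - β) := by ring_nf
  have he2 : b ^ ((1 - β) + 1) = b ^ (2 - β) := by ring_nf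
  rw [he1, he2, le_div_iff_of_neg (by linarith : (1 - β) + 1 < 0)] at hmono
  nlinarith [hmono]

/-- The explicit antiderivative bound used in the telescoping argument. -/
private def Hf (C ρ ν β r : ℝ) : ℝ :=
  C * (ρ * r ^ (1 - β) / (β - 1) + 2 * ν * r ^ (2 - β) / (β - 2))

private lemma Hf_nonneg {C ρ ν β r : ℝ} (hC : 0 ≤ C) (hρ : 0 ≤ ρ) (hν : 0 ≤ ν)
    (hβ : 2 < β) (hr : 0 ≤ r) : 0 ≤ Hf C ρ ν β r := by
  have h1 : (0:ℝ) ≤ r ^ (1 - β) := Real.rpow_nonneg hr _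
  have h2 : (0:ℝ) ≤ r ^ (2 - β) := Real.rpow_nonneg hr _
  have hβ1 : (0:ℝ) < β - 1 := by linarith
  have hβ2 : (0:ℝ) < β - 2 := by linarith
  apply mul_nonneg hC
  apply add_nonneg
  · exact div_nonneg (mul_nonneg hρ h1) hβ1.le
  · exact div_nonneg (mul_nonneg (by linarith) h2) hβ2.le

private lemma Hstep {C ρ ν β a b : ℝ} (hC : 0 ≤ C) (hρ : 0 ≤ ρ) (hν : 0 ≤ ν)
    (hβ : 2 < β) (ha : 0 < a) (hab : a ≤ b) :
    C * b ^ (-β) * (ρ * (b - a) + ν * (b ^ 2 - a ^ 2)) ≤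
      Hf C ρ ν β a - Hf C ρ ν β b := by
  have h1 := pow_ineq1 ha hab (by linarith : 1 < β)
  have h2 := pow_ineq2 ha hab hβ
  have hβ1 : (0:ℝ) < β - 1 := by linarith
  have hβ2 : (0:ℝ) < β - 2 := by linarith
  have h1' : b ^ (-β) * (b - a) ≤ (a ^ (1 - β) - b ^ (1 - β)) / (β - 1) := by
    rw [le_div_iff₀ hβ1]; nlinarith [h1]
  have h2' : b ^ (-β) * (b ^ 2 - a ^ 2) ≤ 2 * (a ^ (2 - β) - b ^ (2 - β)) / (β - 2) := by
    rw [le_div_iff₀ hβ2]; nlinarith [h2]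
  have hcρ : 0 ≤ C * ρ := mul_nonneg hC hρ
  have hcν : 0 ≤ C * ν := mul_nonneg hC hν
  have e1 := mul_le_mul_of_nonneg_left h1' hcρ
  have e2 := mul_le_mul_of_nonneg_left h2' hcν
  have key : Hf C ρ ν β a - Hf C ρ ν β b =
      C * ρ * ((a ^ (1 - β) - b ^ (1 - β)) / (β - 1)) +
        C * ν * (2 * (a ^ (2 - β) - b ^ (2 - β)) / (β - 2)) := by
    unfold Hf; field_simp; ring
  rw [key, show C * b ^ (-β) * (ρ * (b - a) + ν * (b ^ 2 - a ^ 2)) =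
    C * ρ * (b ^ (-β) * (b - a)) + C * ν * (b ^ (-β) * (b ^ 2 - a ^ 2)) by ring]
  linarith [e1, e2]

private lemma key_lemma {ι : Type*} [DecidableEq ι] (g : ι → ℝ) (ℓ : ℝ → ℝ)
    (C σ ρ ν β r₀ t : ℝ) (hC : 0 ≤ C) (hσ : 0 ≤ σ) (hρ : 0 ≤ ρ) (hν : 0 ≤ ν)
    (hβ : 2 < β) (hr₀ : 0 < r₀) (ht : r₀ < t)
    (hℓ0 : ∀ r, 0 ≤ ℓ r) (hanti : AntitoneOn ℓ (Set.Ici 0))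
    (hub : ∀ r, r₀ < r → ℓ r ≤ C * r ^ (-β))
    (hcount : ∀ (s : Finset ι) (M : ℝ), t ≤ M → (∀ i ∈ s, g i ≤ M) →
      (s.card : ℝ) ≤ σ + (ρ * (M - t) + ν * (M ^ 2 - t ^ 2)))
    (hgt : ∀ i, t < g i)
    (s : Finset ι) :
    ∑ i ∈ s, ℓ (g i) ≤ σ * ℓ t + Hf C ρ ν β t := by
  have ht0 : 0 < t := hr₀.trans ht
  have claim : ∀ n : ℕ, ∀ s : Finset ι, s.card = n → ∀ M : ℝ, t ≤ M →
      (∀ i ∈ s, g i ≤ M) →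
      ∑ i ∈ s, ℓ (g i) ≤ σ * (ℓ t - ℓ M) + (Hf C ρ ν β t - Hf C ρ ν β M) +
        ((n : ℝ) - (ρ * (M - t) + ν * (M ^ 2 - t ^ 2))) * ℓ M := by
    intro n
    induction n with
    | zero =>
      intro s hcard M htM _
      rw [Finset.card_eq_zero.mp hcard, Finset.sum_empty]
      have hM0 : (0:ℝ) ≤ M := by linarith
      have hℓMt : ℓ M ≤ ℓ t := hanti (Set.mem_Ici.2 ht0.le) (Set.mem_Ici.2 hM0) htM
      have hq0 : 0 ≤ ρ * (M - t) + ν * (M ^ 2 - t ^ 2) := by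
        nlinarith [mul_nonneg hρ (sub_nonneg.2 htM),
          mul_nonneg hν (mul_nonneg (sub_nonneg.2 htM) (show (0:ℝ) ≤ M + t by linarith))]
      have hub' : ℓ M ≤ C * M ^ (-β) := hub M (ht.trans_le htM)
      have hst := Hstep hC hρ hν hβ ht0 htM
      have hℓM0 : 0 ≤ ℓ M := hℓ0 M
      have h1 : (ρ * (M - t) + ν * (M ^ 2 - t ^ 2)) * ℓ M ≤
          (ρ * (M - t) + ν * (M ^ 2 - t ^ 2)) * (C * M ^ (-β)) :=
        mul_le_mul_of_nonneg_left hub' hq0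
      have h2 : 0 ≤ σ * (ℓ t - ℓ M) := mul_nonneg hσ (by linarith)
      push_cast
      linarith [hst, h1, h2]
    | succ n ih =>
      intro s hcard M htM hbd
      have hne : s.Nonempty := Finset.card_pos.mp (by omega)
      obtain ⟨i₀, hi₀s, hmax⟩ := s.exists_max_image g hne
      set r := g i₀ with hr
      have htr : t < r := hgt i₀
      have hrM : r ≤ M := hbd i₀ hi₀s
      have hcard' : (s.erase i₀).card = n := by
        rw [Finset.card_erase_of_mem hi₀s, hcard]; rfl
      have hsum := ih (s.erase i₀) hcard' r htr.le
        (fun i hi => hmax i (Finset.mem_of_mem_erase hi))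
      have hsplit : ∑ i ∈ s, ℓ (g i) = ℓ r + ∑ i ∈ s.erase i₀, ℓ (g i) :=
        (Finset.add_sum_erase s (fun i => ℓ (g i)) hi₀s).symm
      have hcnt : ((n : ℝ) + 1) ≤ σ + (ρ * (r - t) + ν * (r ^ 2 - t ^ 2)) := by
        have := hcount s r htr.le hmax
        rw [hcard] at this; push_cast at this; linarith
      have hℓMr : ℓ M ≤ ℓ r :=
        hanti (Set.mem_Ici.2 (by linarith)) (Set.mem_Ici.2 (by linarith)) hrM
      have hℓM0 : 0 ≤ ℓ M := hℓ0 M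
      have hq : 0 ≤ (ρ * (M - t) + ν * (M ^ 2 - t ^ 2)) -
          (ρ * (r - t) + ν * (r ^ 2 - t ^ 2)) := by
        nlinarith [mul_nonneg hρ (sub_nonneg.2 hrM),
          mul_nonneg hν (mul_nonneg (sub_nonneg.2 hrM) (show (0:ℝ) ≤ M + r by linarith))]
      have hub' : ℓ M ≤ C * M ^ (-β) := hub M (by linarith)
      have hst := Hstep hC hρ hν hβ (ht0.trans htr) hrM
      have p1 : ((n : ℝ) + 1 - (ρ * (r - t) + ν * (r ^ 2 - t ^ 2))) * (ℓ r - ℓ M) ≤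
          σ * (ℓ r - ℓ M) := mul_le_mul_of_nonneg_right (by linarith) (by linarith)
      have p2 : ((ρ * (M - t) + ν * (M ^ 2 - t ^ 2)) -
            (ρ * (r - t) + ν * (r ^ 2 - t ^ 2))) * ℓ M ≤
          ((ρ * (M - t) + ν * (M ^ 2 - t ^ 2)) - (ρ * (r - t) + ν * (r ^ 2 - t ^ 2))) *
            (C * M ^ (-β)) := mul_le_mul_of_nonneg_left hub' hq
      have p3 : C * M ^ (-β) * (ρ * (M - r) + ν * (M ^ 2 - r ^ 2)) ≤
          Hf C ρ ν β r - Hf C ρ ν β M := hst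
      rw [hsplit]
      push_cast
      linarith [hsum, p1, p2, p3]
  rcases s.eq_empty_or_nonempty with rfl | hne
  · rw [Finset.sum_empty]
    have := Hf_nonneg hC hρ hν hβ ht0.le
    linarith [mul_nonneg hσ (hℓ0 t)]
  · set M := max (s.sup' hne g) t with hM
    have htM : t ≤ M := le_max_right _ _
    have hbd : ∀ i ∈ s, g i ≤ M := fun i hi =>
      le_trans (Finset.le_sup' g hi) (le_max_left _ _)
    have h := claim s.card s rfl M htM hbd
    have hcnt := hcount s M htM hbd
    have hHM : 0 ≤ Hf C ρ ν β M := Hf_nonneg hC hρ hν hβ (by linarith)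
    have hℓM0 : 0 ≤ ℓ M := hℓ0 M
    have hlast : ((s.card : ℝ) - (ρ * (M - t) + ν * (M ^ 2 - t ^ 2))) * ℓ M ≤ σ * ℓ M :=
      mul_le_mul_of_nonneg_right (by linarith) hℓM0
    linarith [h, hlast, hHM]

private lemma quad_bound {ρβ νβ δ t : ℝ} (hρβ : 0 ≤ ρβ) (hνβ : 0 ≤ νβ) (hδ : 0 < δ)
    (ht : 0 < t)
    (htle : t ≤ (Real.sqrt (ρβ ^ 2 + 4 * νβ * δ) - ρβ) / (2 * νβ)) :
    ρβ * t + νβ * t ^ 2 ≤ δ := by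
  rcases eq_or_lt_of_le hνβ with h0 | hpos
  · exfalso
    have h2 : (2:ℝ) * νβ = 0 := by rw [← h0]; ring
    rw [h2, div_zero] at htle
    linarith
  · have hD : 0 ≤ ρβ ^ 2 + 4 * νβ * δ := by positivity
    have h2ν : (0:ℝ) < 2 * νβ := by linarith
    rw [le_div_iff₀ h2ν] at htle
    have hs : 2 * νβ * t + ρβ ≤ Real.sqrt (ρβ ^ 2 + 4 * νβ * δ) := by linarith
    have hL0 : 0 ≤ 2 * νβ * t + ρβ := by positivity
    have hsq := Real.sq_sqrt hD
    nlinarith [pow_le_pow_left₀ hL0 hs 2, hsq, hpos]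

theorem stmt7 (Φ Ψ : Set Plane) (σ ρ ν : ℝ)
    (hσ : 0 ≤ σ) (hρ : 0 ≤ ρ) (hν : 0 ≤ ν)
    (hloc : ∀ R : ℝ, (Φ ∩ Metric.closedBall 0 R).Finite)
    (hreg : ∀ y ∈ Ψ, RingRegulatedAbout Φ y σ ρ ν)
    (ℓ : ℝ → ℝ) (hℓ0 : ∀ r, 0 ≤ ℓ r)
    (hℓanti : AntitoneOn ℓ (Set.Ici 0))
    (hℓbdd : BddAbove (ℓ '' Set.Ici 0))
    (C C' r₀ β : ℝ) (hC' : 0 < C') (hCC' : C' ≤ C) (hr₀ : 0 < r₀) (hβ : 2 < β)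
    (hℓlb : ∀ r, r₀ < r → C' * r ^ (-β) ≤ ℓ r)
    (hℓub : ∀ r, r₀ < r → ℓ r ≤ C * r ^ (-β))
    (hΦr₀ : ∀ x ∈ Φ, ∀ y ∈ Ψ, r₀ < ‖x - y‖)
    (γ₀ : ℝ) (hγ₀ : 0 < γ₀) (m : ℝ) (hm : 0 < m)
    (η₀ α : ℝ) (hη₀ : 0 < η₀) (hα0 : 0 < α) (hα1 : α < 1)
    (hαη : σ < α / η₀)
    (hvoid : ∀ x ∈ Φ, ∃ y ∈ Ψ,
      ‖x - y‖ ≤ tau0 C' γ₀ β σ ((C / C') * (ρ / (β - 1)))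
        ((C / C') * (2 * ν / (β - 2))) η₀ α) :
    ∀ x ∈ Φ, cfDelay ℓ γ₀ m Φ Ψ x ≤ m / Real.logb 2 (1 + η₀) := by
  classical
  have hC0 : (0:ℝ) ≤ C := hC'.le.trans hCC'
  -- nonnegativity facts
  have hSr : ∀ (Φ₀ : Set Plane) (w : Plane), 0 ≤ SrINR ℓ γ₀ Φ₀ w := by
    intro Φ₀ w
    apply div_nonneg (hℓ0 _)
    have : (0:ℝ) ≤ tailInterference ℓ Φ₀ ‖w‖ := tsum_nonneg fun i => hℓ0 _
    linarith
  have hrate0 : ∀ (Φ₀ : Set Plane) (w : Plane), 0 ≤ rate ℓ γ₀ Φ₀ w := by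
    intro Φ₀ w
    apply Real.sInf_nonneg
    rintro b ⟨u, _, rfl⟩
    exact Real.logb_nonneg one_lt_two (by linarith [hSr Φ₀ u])
  have hv0 : ∀ (Φ₀ : Set Plane) (w : Plane), 0 ≤ vDelay ℓ γ₀ m Φ₀ w :=
    fun Φ₀ w => div_nonneg hm.le (hrate0 Φ₀ w)
  have hsic0 : ∀ (Φ₀ : Set Plane) (w : Plane), 0 ≤ sicDelay ℓ γ₀ m Φ₀ w := by
    intro Φ₀ w
    apply Real.sSup_nonneg
    rintro b ⟨u, _, rfl⟩
    exact hv0 Φ₀ u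
  intro x hx
  obtain ⟨y, hyΨ, hxyτ⟩ := hvoid x hx
  set Φ' : Set Plane := (fun w => w - y) '' Φ with hΦ'
  set τ : ℝ := tau0 C' γ₀ β σ ((C / C') * (ρ / (β - 1)))
      ((C / C') * (2 * ν / (β - 2))) η₀ α with hτ
  have hlbpos : 0 < Real.logb 2 (1 + η₀) := Real.logb_pos one_lt_two (by linarith)
  -- the core SrINR bound
  have hcore : ∀ u, u ∈ Φ' → ‖u‖ ≤ τ → η₀ ≤ SrINR ℓ γ₀ Φ' u := by
    intro u huΦ' huτ
    obtain ⟨v, hvΦ, hvu⟩ := huΦ'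
    have hrt : r₀ < ‖u‖ := by
      rw [← hvu]; exact hΦr₀ v hvΦ y hyΨ
    have ht0 : 0 < ‖u‖ := hr₀.trans hrt
    have hβ1 : (0:ℝ) < β - 1 := by linarith
    have hβ2 : (0:ℝ) < β - 2 := by linarith
    have hρβ0 : 0 ≤ (C / C') * (ρ / (β - 1)) :=
      mul_nonneg (div_nonneg hC0 hC'.le) (div_nonneg hρ hβ1.le)
    have hνβ0 : 0 ≤ (C / C') * (2 * ν / (β - 2)) :=
      mul_nonneg (div_nonneg hC0 hC'.le) (div_nonneg (by linarith) hβ2.le)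
    rw [hτ, tau0] at huτ
    have htτ1 : ‖u‖ ≤ (Real.sqrt (((C / C') * (ρ / (β - 1))) ^ 2 +
        4 * ((C / C') * (2 * ν / (β - 2))) * (α / η₀ - σ)) - (C / C') * (ρ / (β - 1))) /
          (2 * ((C / C') * (2 * ν / (β - 2)))) :=
      le_trans huτ (min_le_left _ _)
    have htτ2 : ‖u‖ ≤ (C' * (1 - α) / (η₀ * γ₀)) ^ (1 / β) :=
      le_trans huτ (min_le_right _ _)
    have hquad : (C / C') * (ρ / (β - 1)) * ‖u‖ +
        (C / C') * (2 * ν / (β - 2)) * ‖u‖ ^ 2 ≤ α / η₀ - σ :=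
      quad_bound hρβ0 hνβ0 (by linarith) ht0 htτ1
    have hsig : C' * ‖u‖ ^ (-β) ≤ ℓ ‖u‖ := hℓlb _ hrt
    -- noise bound
    have hA : (0:ℝ) < C' * (1 - α) / (η₀ * γ₀) :=
      div_pos (mul_pos hC' (by linarith)) (mul_pos hη₀ hγ₀)
    have htβ : ‖u‖ ^ β ≤ C' * (1 - α) / (η₀ * γ₀) := by
      have h1 : ‖u‖ ^ β ≤ ((C' * (1 - α) / (η₀ * γ₀)) ^ (1 / β)) ^ β :=
        Real.rpow_le_rpow ht0.le htτ2 (by linarith)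
      rwa [← Real.rpow_mul hA.le, one_div_mul_cancel (show β ≠ 0 by linarith),
        Real.rpow_one] at h1
    have hnoise : η₀ * γ₀ ≤ (1 - α) * ℓ ‖u‖ := by
      have htβpos : 0 < ‖u‖ ^ β := Real.rpow_pos_of_pos ht0 β
      have hinv : (C' * (1 - α) / (η₀ * γ₀))⁻¹ ≤ (‖u‖ ^ β)⁻¹ :=
        inv_anti₀ htβpos htβ
      have hneg : ‖u‖ ^ (-β) = (‖u‖ ^ β)⁻¹ := Real.rpow_neg ht0.le β
      have h2 : C' * (C' * (1 - α) / (η₀ * γ₀))⁻¹ ≤ C' * ‖u‖ ^ (-β) := by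
        rw [hneg]; exact mul_le_mul_of_nonneg_left hinv hC'.le
      have h3 : C' * (C' * (1 - α) / (η₀ * γ₀))⁻¹ = η₀ * γ₀ / (1 - α) := by
        rw [show C' * (1 - α) / (η₀ * γ₀) = C' * ((1 - α) / (η₀ * γ₀)) by ring,
          mul_inv, ← mul_assoc, mul_inv_cancel₀ (ne_of_gt hC'), one_mul, inv_div]
      rw [h3] at h2
      have h4 : η₀ * γ₀ / (1 - α) ≤ ℓ ‖u‖ := le_trans h2 hsig
      rw [div_le_iff₀ (show (0:ℝ) < 1 - α by linarith)] at h4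
      linarith
    -- interference bound
    have hcount : ∀ (s : Finset {w : Plane // w ∈ Φ' ∧ ‖u‖ < ‖w‖}) (M : ℝ),
        ‖u‖ ≤ M → (∀ i ∈ s, ‖(i : Plane)‖ ≤ M) →
        (s.card : ℝ) ≤ σ + (ρ * (M - ‖u‖) + ν * (M ^ 2 - ‖u‖ ^ 2)) := by
      intro s M htM hbd
      have hkey : ∀ R : ℝ, M < R →
          (s.card : ℝ) ≤ σ + ρ * (R - ‖u‖) + ν * (R ^ 2 - ‖u‖ ^ 2) := by
        intro R hMR
        have hinj : Function.Injective
            (fun i : {w : Plane // w ∈ Φ' ∧ ‖u‖ < ‖w‖} => (i : Plane) + y) := by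
          intro i j hij
          exact Subtype.ext (add_left_injective y hij)
        set F : Finset Plane :=
          s.image (fun i : {w : Plane // w ∈ Φ' ∧ ‖u‖ < ‖w‖} => (i : Plane) + y) with hF
        have hcardF : F.card = s.card := by
          rw [hF]; exact Finset.card_image_of_injective s hinj
        have hsub : ↑F ⊆ Φ ∩ {z : Plane | ‖u‖ < ‖z - y‖ ∧ ‖z - y‖ < R} := by
          intro z hz
          rw [hF] at hz
          obtain ⟨i, his, rfl⟩ := Finset.mem_image.mp (Finset.mem_coe.mp hz)
          obtain ⟨⟨v', hv', hv'eq⟩, hti⟩ := i.2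
          constructor
          · have hvi : v' = (i : Plane) + y := eq_add_of_sub_eq hv'eq
            rw [← hvi]
            exact hv'
          · refine ⟨?_, ?_⟩ <;> rw [add_sub_cancel_right]
            · exact hti
            · exact lt_of_le_of_lt (hbd i his) hMR
        have hfin : (Φ ∩ {z : Plane | ‖u‖ < ‖z - y‖ ∧ ‖z - y‖ < R}).Finite := by
          apply (hloc (R + ‖y‖)).subset
          intro z hz
          refine ⟨hz.1, ?_⟩
          rw [Metric.mem_closedBall, dist_zero_right]
          calc ‖z‖ = ‖(z - y) + y‖ := by rw [sub_add_cancel]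
            _ ≤ ‖z - y‖ + ‖y‖ := norm_add_le _ _
            _ ≤ R + ‖y‖ := by have := hz.2.2; linarith
        calc (s.card : ℝ) = (F.card : ℝ) := by rw [hcardF]
          _ = (((↑F : Set Plane)).ncard : ℝ) := by rw [Set.ncard_coe_finset]
          _ ≤ ((Φ ∩ {z : Plane | ‖u‖ < ‖z - y‖ ∧ ‖z - y‖ < R}).ncard : ℝ) := by
              exact_mod_cast Set.ncard_le_ncard hsub hfin
          _ ≤ σ + ρ * (R - ‖u‖) + ν * (R ^ 2 - ‖u‖ ^ 2) :=
              hreg y hyΨ ‖u‖ R (norm_nonneg u) (lt_of_le_of_lt htM hMR)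
      have hcont : Continuous fun R : ℝ => σ + ρ * (R - ‖u‖) + ν * (R ^ 2 - ‖u‖ ^ 2) :=
        ((continuous_const.add (continuous_const.mul
          (continuous_id.sub continuous_const))).add (continuous_const.mul
          ((continuous_pow 2).sub continuous_const)))
      have htend : Filter.Tendsto (fun R : ℝ => σ + ρ * (R - ‖u‖) + ν * (R ^ 2 - ‖u‖ ^ 2))
          (nhdsWithin M (Set.Ioi M)) (nhds (σ + ρ * (M - ‖u‖) + ν * (M ^ 2 - ‖u‖ ^ 2))) :=
        (hcont.tendsto M).mono_left nhdsWithin_le_nhds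
      have hev : ∀ᶠ R in nhdsWithin M (Set.Ioi M),
          (s.card : ℝ) ≤ σ + ρ * (R - ‖u‖) + ν * (R ^ 2 - ‖u‖ ^ 2) :=
        eventually_nhdsWithin_of_forall (fun R hR => hkey R hR)
      have := ge_of_tendsto htend hev
      linarith [this]
    have hIB : tailInterference ℓ Φ' ‖u‖ ≤ σ * ℓ ‖u‖ + Hf C ρ ν β ‖u‖ := by
      have hB0 : 0 ≤ σ * ℓ ‖u‖ + Hf C ρ ν β ‖u‖ := by
        have := Hf_nonneg hC0 hρ hν hβ ht0.le
        linarith [mul_nonneg hσ (hℓ0 ‖u‖)]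
      by_cases hsm : Summable (fun w : {w : Plane // w ∈ Φ' ∧ ‖u‖ < ‖w‖} => ℓ ‖(w : Plane)‖)
      · apply Summable.tsum_le_of_sum_le hsm
        intro s
        exact key_lemma (ι := {w : Plane // w ∈ Φ' ∧ ‖u‖ < ‖w‖})
          (fun i => ‖(i : Plane)‖) ℓ C σ ρ ν β r₀ ‖u‖ hC0 hσ hρ hν hβ hr₀ hrt
          hℓ0 hℓanti hℓub hcount (fun i => i.2.2) s
      · have : tailInterference ℓ Φ' ‖u‖ = 0 := tsum_eq_zero_of_not_summable hsm
        rw [this]; exact hB0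
    -- convert the bound
    have hfact : Hf C ρ ν β ‖u‖ = ((C / C') * (ρ / (β - 1)) * ‖u‖ +
        (C / C') * (2 * ν / (β - 2)) * ‖u‖ ^ 2) * (C' * ‖u‖ ^ (-β)) := by
      unfold Hf
      have e1 : ‖u‖ ^ (1 - β) = ‖u‖ ^ (-β) * ‖u‖ := by
        rw [show (1 - β) = -β + 1 by ring, Real.rpow_add ht0, Real.rpow_one]
      have e2 : ‖u‖ ^ (2 - β) = ‖u‖ ^ (-β) * ‖u‖ ^ 2 := by
        rw [show (2 - β) = -β + 2 by ring, Real.rpow_add ht0,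
          show ((2:ℝ)) = ((2:ℕ):ℝ) by norm_num, Real.rpow_natCast]
      rw [e1, e2]
      field_simp
    have hIαη : tailInterference ℓ Φ' ‖u‖ ≤ (α / η₀) * ℓ ‖u‖ := by
      have hfn : 0 ≤ (C / C') * (ρ / (β - 1)) * ‖u‖ +
          (C / C') * (2 * ν / (β - 2)) * ‖u‖ ^ 2 := by
        have := mul_nonneg hρβ0 ht0.le
        have := mul_nonneg hνβ0 (sq_nonneg ‖u‖)
        linarith
      have h1 : Hf C ρ ν β ‖u‖ ≤ ((C / C') * (ρ / (β - 1)) * ‖u‖ +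
          (C / C') * (2 * ν / (β - 2)) * ‖u‖ ^ 2) * ℓ ‖u‖ := by
        rw [hfact]
        exact mul_le_mul_of_nonneg_left hsig hfn
      have h2 : σ * ℓ ‖u‖ + ((C / C') * (ρ / (β - 1)) * ‖u‖ +
          (C / C') * (2 * ν / (β - 2)) * ‖u‖ ^ 2) * ℓ ‖u‖ ≤ (α / η₀) * ℓ ‖u‖ := by
        have h3 : σ + ((C / C') * (ρ / (β - 1)) * ‖u‖ +
            (C / C') * (2 * ν / (β - 2)) * ‖u‖ ^ 2) ≤ α / η₀ := by linarith
        have := mul_le_mul_of_nonneg_right h3 (hℓ0 ‖u‖)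
        linarith [this]
      linarith [hIB, h1, h2]
    -- finish
    have hInn : (0:ℝ) ≤ tailInterference ℓ Φ' ‖u‖ := tsum_nonneg fun i => hℓ0 _
    have hden : 0 < tailInterference ℓ Φ' ‖u‖ + γ₀ := by linarith
    show η₀ ≤ ℓ ‖u‖ / (tailInterference ℓ Φ' ‖u‖ + γ₀)
    rw [le_div_iff₀ hden]
    have hη₀I : η₀ * tailInterference ℓ Φ' ‖u‖ ≤ α * ℓ ‖u‖ := by
      have := mul_le_mul_of_nonneg_left hIαη hη₀.le
      have heq : η₀ * ((α / η₀) * ℓ ‖u‖) = α * ℓ ‖u‖ := by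
        field_simp
      linarith [this, heq.le, heq.ge]
    rw [mul_add]
    linarith [hnoise, hη₀I]
  -- assemble
  have hbdd : BddBelow ((fun y => sicDelay ℓ γ₀ m ((fun w => w - y) '' Φ) (x - y)) '' Ψ) := by
    refine ⟨0, ?_⟩
    rintro z ⟨y', _, rfl⟩
    exact hsic0 _ _
  have hmem : sicDelay ℓ γ₀ m Φ' (x - y) ∈
      (fun y => sicDelay ℓ γ₀ m ((fun w => w - y) '' Φ) (x - y)) '' Ψ := ⟨y, hyΨ, rfl⟩
  have h1 : cfDelay ℓ γ₀ m Φ Ψ x ≤ sicDelay ℓ γ₀ m Φ' (x - y) := csInf_le hbdd hmem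
  refine h1.trans ?_
  unfold sicDelay
  apply Real.sSup_le ?_ (div_nonneg hm.le hlbpos.le)
  rintro z ⟨w, ⟨hwΦ', hwle⟩, rfl⟩
  have hrge : Real.logb 2 (1 + η₀) ≤ rate ℓ γ₀ Φ' w := by
    unfold rate
    have hne : ((fun w' => Real.logb 2 (1 + SrINR ℓ γ₀ Φ' w')) ''
        {u ∈ Φ' | ‖u‖ ≤ ‖w‖}).Nonempty :=
      ⟨_, ⟨w, ⟨hwΦ', le_rfl⟩, rfl⟩⟩
    apply le_csInf hne
    rintro b ⟨u, ⟨huΦ', hule⟩, rfl⟩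
    have hSru : η₀ ≤ SrINR ℓ γ₀ Φ' u :=
      hcore u huΦ' (le_trans hule (le_trans hwle hxyτ))
    exact Real.logb_le_logb_of_le one_lt_two (by linarith) (by linarith)
  show vDelay ℓ γ₀ m Φ' w ≤ m / Real.logb 2 (1 + η₀)
  unfold vDelay
  exact div_le_div_of_nonneg_left hm.le hlbpos hrge
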